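/- Let q ≥ 3 be an integer and H ∈ (3/4, 1 − 1/(2q)) with H ≠ 1 − 1/(2(q−1)). Then there exists a constant C > 0 such that for every N ≥ 2, N^{1−4H} · Σ_{i,j,k,l=1}^{N} |ρ_H(i−k)|^{q−1} · |ρ_H(i−j)| · |ρ_H(k−l)| · |ρ_H(j−l)| ≤ C · N^{2H−2} if H < 1 − 1/(2(q−1)), and ≤ C · N^{(2H−2)q+1} if H > 1 − 1/(2(q−1)). -/

import Mathlib

open Filter Topology

/-- The autocovariance function of fractional Gaussian noise with Hurst index `H`:
`ρ_H(v) = ½(|v+1|^{2H} + |v−1|^{2H} − 2|v|^{2H})`. -/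
noncomputable def rhoFGN (H : ℝ) (v : ℤ) : ℝ :=
  (|(v : ℝ) + 1| ^ (2 * H) + |(v : ℝ) - 1| ^ (2 * H) - 2 * |(v : ℝ)| ^ (2 * H)) / 2


section helpers
open Real Finset

lemma mvt_rpow {p a b : ℝ} (ha : 0 ≤ a) (hab : a < b) (hp : 0 < a ∨ 0 < p) :
    ∃ c, a < c ∧ c < b ∧ b ^ p - a ^ p = p * c ^ (p - 1) * (b - a) := by
  have hcont : ContinuousOn (fun x : ℝ => x ^ p) (Set.Icc a b) := by
    intro x hx
    apply ContinuousAt.continuousWithinAt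
    rcases hp with hp | hp
    · exact Real.continuousAt_rpow_const x p (Or.inl (by nlinarith [hx.1] : x ≠ 0))
    · exact Real.continuousAt_rpow_const x p (Or.inr hp.le)
  have hdiff : DifferentiableOn ℝ (fun x : ℝ => x ^ p) (Set.Ioo a b) := by
    intro x hx
    have hx0 : x ≠ 0 := by
      have h1 := hx.1; intro h; rw [h] at h1; exact absurd h1 (not_lt.mpr ha)
    exact ((Real.hasDerivAt_rpow_const (Or.inl hx0)).differentiableAt).differentiableWithinAt
  obtain ⟨c, hc, hderiv⟩ := exists_deriv_eq_slope (fun x : ℝ => x ^ p) hab hcont hdiff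
  refine ⟨c, hc.1, hc.2, ?_⟩
  have hc0 : c ≠ 0 := by have := lt_of_le_of_lt ha hc.1; positivity
  rw [Real.deriv_rpow_const] at hderiv
  have hba : b - a ≠ 0 := by linarith
  field_simp at hderiv
  linarith [hderiv]

lemma ptwise1 {γ : ℝ} (h0 : 0 < γ) (h1 : γ ≤ 1) (n : ℕ) (hn : 1 ≤ n) :
    γ * (n : ℝ) ^ (γ - 1) ≤ (n : ℝ) ^ γ - ((n - 1 : ℕ) : ℝ) ^ γ := by
  have hlt : ((n - 1 : ℕ) : ℝ) < (n : ℝ) := by exact_mod_cast (by omega : n - 1 < n)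
  obtain ⟨c, hc1, hc2, heq⟩ := mvt_rpow (p := γ) (by positivity) hlt (Or.inr h0)
  have hsub : (n : ℝ) - ((n - 1 : ℕ) : ℝ) = 1 := by
    have h1 : (1:ℕ) ≤ n := hn; push_cast [h1]; ring
  rw [hsub, mul_one] at heq
  rw [heq]
  have hc0 : 0 < c := lt_of_le_of_lt (by positivity) hc1
  have : (n : ℝ) ^ (γ - 1) ≤ c ^ (γ - 1) :=
    Real.rpow_le_rpow_of_nonpos hc0 hc2.le (by linarith)
  nlinarith

lemma ptwise2 {γ : ℝ} (h0 : γ < 0) (n : ℕ) (hn : 2 ≤ n) :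
    (-γ) * (n : ℝ) ^ (γ - 1) ≤ ((n - 1 : ℕ) : ℝ) ^ γ - (n : ℝ) ^ γ := by
  have hpos : (0:ℝ) < ((n - 1 : ℕ) : ℝ) := by exact_mod_cast (by omega : 0 < n - 1)
  have hlt : ((n - 1 : ℕ) : ℝ) < (n : ℝ) := by exact_mod_cast (by omega : n - 1 < n)
  obtain ⟨c, hc1, hc2, heq⟩ := mvt_rpow (p := γ) hpos.le hlt (Or.inl hpos)
  have hsub : (n : ℝ) - ((n - 1 : ℕ) : ℝ) = 1 := by
    have h1 : (1:ℕ) ≤ n := by omega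
    push_cast [h1]; ring
  rw [hsub, mul_one] at heq
  have hc0 : 0 < c := lt_of_le_of_lt hpos.le hc1
  have : (n : ℝ) ^ (γ - 1) ≤ c ^ (γ - 1) :=
    Real.rpow_le_rpow_of_nonpos hc0 hc2.le (by linarith)
  nlinarith

lemma sumA {γ : ℝ} (h0 : 0 < γ) (h1 : γ ≤ 1) (N : ℕ) :
    ∑ n ∈ Icc 1 N, (n : ℝ) ^ (γ - 1) ≤ (N : ℝ) ^ γ / γ := by
  induction N with
  | zero => simp [Real.zero_rpow h0.ne']
  | succ N ih =>
    rw [Finset.sum_Icc_succ_top (by omega)]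
    have hp := ptwise1 h0 h1 (N + 1) (by omega)
    have hcast : ((N + 1 - 1 : ℕ) : ℝ) = (N : ℝ) := by norm_num
    rw [hcast] at hp
    push_cast at hp ih ⊢
    rw [le_div_iff₀ h0] at ih ⊢
    nlinarith [Real.rpow_nonneg (by positivity : (0:ℝ) ≤ (N:ℝ)+1) (γ-1)]

lemma sumB {γ : ℝ} (h0 : γ < 0) (N : ℕ) :
    ∑ n ∈ Icc 1 N, (n : ℝ) ^ (γ - 1) ≤ 1 + 1 / (-γ) := by
  have hng : 0 < -γ := by linarith
  have key : ∀ M : ℕ, 1 ≤ M → ∑ n ∈ Icc 2 M, (n : ℝ) ^ (γ - 1) ≤ (1 - (M:ℝ)^γ) / (-γ) := by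
    intro M
    induction M with
    | zero => omega
    | succ M ih =>
      intro _
      rcases Nat.eq_zero_or_pos M with h | h
      · subst h
        rw [show Finset.Icc 2 1 = (∅ : Finset ℕ) from rfl]
        simp [Real.one_rpow]
      · have ih' := ih h
        rw [Finset.sum_Icc_succ_top (by omega)]
        have hp := ptwise2 h0 (M + 1) (by omega)
        have hcast : ((M + 1 - 1 : ℕ) : ℝ) = (M : ℝ) := by norm_num
        rw [hcast] at hp
        push_cast at ih' hp ⊢
        rw [le_div_iff₀ hng] at ih' ⊢
        nlinarith
  rcases Nat.lt_or_ge N 1 with h | h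
  · interval_cases N
    simp; exact (inv_nonpos.mpr h0.le).trans zero_le_one
  · have e0 : Finset.Icc 1 N = Finset.Ioc 0 N := Finset.Icc_add_one_left_eq_Ioc 0 N
    have e2 : Finset.Icc 2 N = Finset.Ioc 1 N := Finset.Icc_add_one_left_eq_Ioc 1 N
    have hsplit := Finset.sum_Ioc_consecutive (fun n : ℕ => (n:ℝ)^(γ-1)) (by omega : (0:ℕ) ≤ 1) h
    have hIoc01 : ∑ n ∈ Finset.Ioc 0 1, ((n:ℕ):ℝ)^(γ-1) = 1 := by
      rw [show Finset.Ioc 0 1 = ({1} : Finset ℕ) from rfl]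
      simp [Real.one_rpow]
    have hNpos : (0:ℝ) < (N:ℝ)^γ :=
      Real.rpow_pos_of_pos (by exact_mod_cast h) γ
    have hk := key N h
    rw [e0, ← hsplit, hIoc01, ← e2]
    have : (1 - (N:ℝ)^γ) / (-γ) ≤ 1/(-γ) := by gcongr; linarith
    linarith [hk.trans this]

lemma reindex {β : ℝ} {N k : ℕ} (hk1 : 1 ≤ k) (hk2 : k ≤ N) :
    ∑ l ∈ Icc 1 N, ((((k:ℤ) - (l:ℤ)).natAbs + 1 : ℕ) : ℝ) ^ β
      ≤ 2 * ∑ n ∈ Icc 1 N, (n:ℝ)^β := by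
  have part : ∀ (s : Finset ℕ) (e : ℕ → ℕ),
      (∀ l ∈ s, ∀ l' ∈ s, e l = e l' → l = l') → (∀ l ∈ s, e l ∈ Finset.Icc 1 N) →
      ∑ l ∈ s, ((e l : ℕ) : ℝ) ^ β ≤ ∑ n ∈ Icc 1 N, (n:ℝ)^β := by
    intro s e hinj hmap
    rw [← Finset.sum_image (f := fun n : ℕ => (n:ℝ)^β) hinj]
    apply Finset.sum_le_sum_of_subset_of_nonneg
    · intro m hm
      obtain ⟨l, hl, rfl⟩ := Finset.mem_image.mp hm
      exact hmap l hl
    · intro i _ _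
      exact Real.rpow_nonneg (by positivity) β
  have e0 : Finset.Icc 1 N = Finset.Ioc 0 N := Finset.Icc_add_one_left_eq_Ioc 0 N
  have hsplit := Finset.sum_Ioc_consecutive
    (fun l : ℕ => ((((k:ℤ) - (l:ℤ)).natAbs + 1 : ℕ) : ℝ) ^ β) (by omega : (0:ℕ) ≤ k) hk2
  beta_reduce at hsplit
  rw [e0, ← hsplit]
  have p1 : ∑ l ∈ Finset.Ioc 0 k, ((((k:ℤ) - (l:ℤ)).natAbs + 1 : ℕ) : ℝ) ^ β
      ≤ ∑ n ∈ Icc 1 N, (n:ℝ)^β := by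
    have hcongr : ∀ l ∈ Finset.Ioc 0 k,
        ((((k:ℤ) - (l:ℤ)).natAbs + 1 : ℕ) : ℝ) ^ β = (((k + 1 - l : ℕ)):ℝ) ^ β := by
      intro l hl
      simp only [Finset.mem_Ioc] at hl
      congr 2
      omega
    rw [Finset.sum_congr rfl hcongr]
    apply part _ (fun l => k + 1 - l)
    · intro l hl l' hl' hll'
      simp only [Finset.mem_Ioc] at hl hl'
      omega
    · intro l hl
      simp only [Finset.mem_Ioc] at hl
      rw [Finset.mem_Icc]
      omega
  have p2 : ∑ l ∈ Finset.Ioc k N, ((((k:ℤ) - (l:ℤ)).natAbs + 1 : ℕ) : ℝ) ^ β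
      ≤ ∑ n ∈ Icc 1 N, (n:ℝ)^β := by
    have hcongr : ∀ l ∈ Finset.Ioc k N,
        ((((k:ℤ) - (l:ℤ)).natAbs + 1 : ℕ) : ℝ) ^ β = (((l - k + 1 : ℕ)):ℝ) ^ β := by
      intro l hl
      simp only [Finset.mem_Ioc] at hl
      congr 2
      omega
    rw [Finset.sum_congr rfl hcongr]
    apply part _ (fun l => l - k + 1)
    · intro l hl l' hl' hll'
      simp only [Finset.mem_Ioc] at hl hl'
      omega
    · intro l hl
      simp only [Finset.mem_Ioc] at hl
      rw [Finset.mem_Icc]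
      omega
  rw [e0] at p1 p2
  linarith


set_option maxHeartbeats 1000000 in
lemma abs_rho_le {H : ℝ} (h1 : 3/4 < H) (h2 : H < 1) (v : ℤ) :
    |rhoFGN H v| ≤ 4 * ((v.natAbs + 1 : ℕ) : ℝ) ^ (2*H - 2) := by
  have hsymm : ∀ w : ℤ, rhoFGN H (-w) = rhoFGN H w := by
    intro w
    unfold rhoFGN
    push_cast
    rw [show -(w:ℝ) + 1 = -((w:ℝ) - 1) by ring, show -(w:ℝ) - 1 = -((w:ℝ) + 1) by ring,
      abs_neg, abs_neg, abs_neg]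
    ring
  suffices h : ∀ n : ℕ, |rhoFGN H (n:ℤ)| ≤ 4 * ((n + 1 : ℕ) : ℝ) ^ (2*H - 2) by
    have hv : rhoFGN H v = rhoFGN H (v.natAbs : ℤ) := by
      rcases Int.natAbs_eq v with hv | hv
      · rw [← hv]
      · conv_lhs => rw [hv]
        exact hsymm _
    rw [hv]
    exact h v.natAbs
  intro n
  have hp1 : (1:ℝ) < 2*H := by linarith
  have hp2 : 2*H < 2 := by linarith
  match n with
  | 0 =>
    have h0 : rhoFGN H ((0:ℕ):ℤ) = 1 := by
      unfold rhoFGN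
      norm_num [Real.zero_rpow (ne_of_gt (by linarith : (0:ℝ) < 2*H)), Real.one_rpow]
    rw [h0]
    have : ((0 + 1 : ℕ) : ℝ) = 1 := by norm_num
    rw [this, Real.one_rpow]
    norm_num
  | 1 =>
    have hval : rhoFGN H ((1:ℕ):ℤ) = ((2:ℝ) ^ (2*H) - 2) / 2 := by
      unfold rhoFGN
      norm_num [Real.zero_rpow (ne_of_gt (by linarith : (0:ℝ) < 2*H)), Real.one_rpow]
    have h2le : (2:ℝ) ≤ (2:ℝ) ^ (2*H) := by
      calc (2:ℝ) = (2:ℝ) ^ (1:ℝ) := (Real.rpow_one 2).symm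
        _ ≤ (2:ℝ) ^ (2*H) := Real.rpow_le_rpow_of_exponent_le (by norm_num) hp1.le
    have h4ge : (2:ℝ) ^ (2*H) ≤ 4 := by
      calc (2:ℝ) ^ (2*H) ≤ (2:ℝ) ^ (2:ℝ) := Real.rpow_le_rpow_of_exponent_le (by norm_num) hp2.le
        _ = 4 := by
          rw [show (2:ℝ) = ((2:ℕ):ℝ) from by norm_num]
          rw [Real.rpow_natCast]
          norm_num
    rw [hval, abs_of_nonneg (by linarith)]
    push_cast
    have hmain : (2:ℝ) ^ (-1:ℝ) ≤ (2:ℝ) ^ (2*H - 2) :=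
      Real.rpow_le_rpow_of_exponent_le (by norm_num) (by linarith)
    rw [Real.rpow_neg_one] at hmain
    nlinarith
  | (m + 2) =>
    set x : ℝ := (m:ℝ) + 2 with hx
    have hx2 : (2:ℝ) ≤ x := by
      have : (0:ℝ) ≤ (m:ℝ) := Nat.cast_nonneg m
      linarith
    set p : ℝ := 2*H with hpdef
    have ecast : (((m + 2 : ℕ):ℤ):ℝ) = x := by push_cast; rw [hx]
    have hval : rhoFGN H ((m + 2 : ℕ) : ℤ) = ((x+1)^p + (x-1)^p - 2*x^p) / 2 := by
      unfold rhoFGN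
      rw [ecast, abs_of_nonneg (by linarith : (0:ℝ) ≤ x + 1),
        abs_of_nonneg (by linarith : (0:ℝ) ≤ x - 1), abs_of_nonneg (by linarith : (0:ℝ) ≤ x)]
    obtain ⟨c₁, hc₁a, hc₁b, heq₁⟩ := mvt_rpow (p := p) (by linarith : (0:ℝ) ≤ x)
      (by linarith : x < x + 1) (Or.inl (by linarith))
    obtain ⟨c₂, hc₂a, hc₂b, heq₂⟩ := mvt_rpow (p := p) (by linarith : (0:ℝ) ≤ x - 1)
      (by linarith : x - 1 < x) (Or.inl (by linarith))
    have hc2pos : (0:ℝ) < c₂ := by linarith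
    obtain ⟨c₃, hc₃a, hc₃b, heq₃⟩ := mvt_rpow (p := p - 1) (le_of_lt hc2pos)
      (by linarith : c₂ < c₁) (Or.inl hc2pos)
    rw [show x + 1 - x = 1 by ring, mul_one] at heq₁
    rw [show x - (x - 1) = 1 by ring, mul_one] at heq₂
    have hD : (x+1)^p + (x-1)^p - 2*x^p = p * ((p-1) * c₃ ^ (p - 1 - 1) * (c₁ - c₂)) := by
      linear_combination heq₁ - heq₂ + p * heq₃
    have hc₃pos : (0:ℝ) < c₃ := by linarith
    have hc₃x : x - 1 ≤ c₃ := by linarith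
    have hppos : (1:ℝ) < p := by rw [hpdef]; linarith
    have hplt : p < 2 := by rw [hpdef]; linarith
    have hc3bound : c₃ ^ (p - 1 - 1) ≤ (x - 1) ^ (p - 1 - 1) :=
      Real.rpow_le_rpow_of_nonpos (by linarith) hc₃x (by linarith)
    have hc3nn : (0:ℝ) ≤ c₃ ^ (p - 1 - 1) := Real.rpow_nonneg (le_of_lt hc₃pos) _
    have ht1 : c₁ - c₂ ≤ 2 := by linarith
    have ht0 : (0:ℝ) ≤ c₁ - c₂ := by linarith
    have hDnonneg : (0:ℝ) ≤ (x+1)^p + (x-1)^p - 2*x^p := by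
      rw [hD]
      exact mul_nonneg (by linarith) (mul_nonneg (mul_nonneg (by linarith) hc3nn) ht0)
    have hx1rp : (0:ℝ) ≤ (x-1) ^ (p-1-1) := Real.rpow_nonneg (by linarith) _
    have hDle : (x+1)^p + (x-1)^p - 2*x^p ≤ 4 * (x - 1) ^ (p - 1 - 1) := by
      rw [hD]
      have t2 : p*(p-1) ≤ 2 := by nlinarith
      calc p * ((p-1) * c₃^(p-1-1) * (c₁-c₂)) = (p*(p-1)) * (c₃^(p-1-1) * (c₁-c₂)) := by ring
        _ ≤ 2 * ((x-1)^(p-1-1) * 2) := by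
            apply mul_le_mul t2 ?_ ?_ (by norm_num)
            · exact mul_le_mul hc3bound ht1 ht0 hx1rp
            · exact mul_nonneg hc3nn ht0
        _ = 4 * (x-1)^(p-1-1) := by ring
    have hratio : (x-1) ^ (p-1-1) ≤ 2 * (x+1) ^ (p-1-1) := by
      have hx13 : (x+1)/3 ≤ x - 1 := by linarith
      have s1 : (x-1) ^ (p-1-1) ≤ ((x+1)/3) ^ (p-1-1) :=
        Real.rpow_le_rpow_of_nonpos (by linarith) hx13 (by linarith)
      have s2 : ((x+1)/3 : ℝ) ^ (p-1-1) = (x+1)^(p-1-1) / 3^(p-1-1) :=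
        Real.div_rpow (by linarith) (by norm_num) _
      have s3 : (3:ℝ) ^ (p-1-1) = ((3:ℝ) ^ (2 - p))⁻¹ := by
        rw [← Real.rpow_neg (by norm_num : (0:ℝ) ≤ 3)]
        congr 1
        ring
      have s4 : (3:ℝ) ^ (2 - p) ≤ 2 := by
        have a1 : (3:ℝ) ^ (2 - p) ≤ (3:ℝ) ^ ((1:ℝ)/2) := by
          apply Real.rpow_le_rpow_of_exponent_le (by norm_num)
          rw [hpdef]; linarith
        have a2 : ((3:ℝ) ^ ((1:ℝ)/2)) ^ (2:ℕ) = 3 := by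
          rw [← Real.rpow_natCast ((3:ℝ) ^ ((1:ℝ)/2)) 2, ← Real.rpow_mul (by norm_num)]
          norm_num
        have a3 : (0:ℝ) ≤ (3:ℝ) ^ ((1:ℝ)/2) := Real.rpow_nonneg (by norm_num) _
        nlinarith
      have s5 : (0:ℝ) < (3:ℝ) ^ (2 - p) := Real.rpow_pos_of_pos (by norm_num) _
      have s6 : (0:ℝ) ≤ (x+1) ^ (p-1-1) := Real.rpow_nonneg (by linarith) _
      calc (x-1) ^ (p-1-1) ≤ ((x+1)/3) ^ (p-1-1) := s1
        _ = (x+1)^(p-1-1) * ((3:ℝ)^(2-p)) := by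
            rw [s2, s3, div_inv_eq_mul]
        _ ≤ 2 * (x+1)^(p-1-1) := by
            have := mul_le_mul_of_nonneg_left s4 s6
            linarith
    have hcast2 : ((m + 2 + 1 : ℕ) : ℝ) = x + 1 := by push_cast; rw [hx]
    have hexp : (2*H - 2 : ℝ) = p - 1 - 1 := by rw [hpdef]; ring
    calc |rhoFGN H ((m + 2 : ℕ) : ℤ)|
        = ((x+1)^p + (x-1)^p - 2*x^p) / 2 := by
          rw [hval, abs_of_nonneg (by linarith)]
      _ ≤ 2 * (x - 1) ^ (p-1-1) := by linarith
      _ ≤ 4 * (x + 1) ^ (p-1-1) := by linarith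
      _ = 4 * ((m + 2 + 1 : ℕ) : ℝ) ^ (2*H - 2) := by rw [hcast2, hexp]

lemma quad_bound {N : ℕ} {F₁ F₂ F₃ F₄ : ℤ → ℝ} {A B D : ℝ}
    (h₁ : ∀ v, 0 ≤ F₁ v) (h₂ : ∀ v, 0 ≤ F₂ v)
    (hA0 : 0 ≤ A) (hD0 : 0 ≤ D)
    (hA : ∀ j ∈ Finset.Icc 1 N, ∀ k ∈ Finset.Icc 1 N,
      ∑ l ∈ Finset.Icc 1 N, F₃ ((k:ℤ) - (l:ℤ)) * F₄ ((j:ℤ) - (l:ℤ)) ≤ A)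
    (hB : ∀ i ∈ Finset.Icc 1 N, ∑ j ∈ Finset.Icc 1 N, F₂ ((i:ℤ) - (j:ℤ)) ≤ B)
    (hD : ∀ i ∈ Finset.Icc 1 N, ∑ k ∈ Finset.Icc 1 N, F₁ ((i:ℤ) - (k:ℤ)) ≤ D) :
    ∑ i ∈ Finset.Icc 1 N, ∑ j ∈ Finset.Icc 1 N, ∑ k ∈ Finset.Icc 1 N, ∑ l ∈ Finset.Icc 1 N,
      F₁ ((i:ℤ) - (k:ℤ)) * F₂ ((i:ℤ) - (j:ℤ)) * F₃ ((k:ℤ) - (l:ℤ)) * F₄ ((j:ℤ) - (l:ℤ))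
      ≤ (N:ℝ) * (B * (D * A)) := by
  have step1 : ∀ i ∈ Finset.Icc 1 N, ∀ j ∈ Finset.Icc 1 N,
      ∑ k ∈ Finset.Icc 1 N, ∑ l ∈ Finset.Icc 1 N,
        F₁ ((i:ℤ)-(k:ℤ)) * F₂ ((i:ℤ)-(j:ℤ)) * F₃ ((k:ℤ)-(l:ℤ)) * F₄ ((j:ℤ)-(l:ℤ))
      ≤ F₂ ((i:ℤ)-(j:ℤ)) * (D * A) := by
    intro i hi j hj
    have inner : ∀ k ∈ Finset.Icc 1 N,
        ∑ l ∈ Finset.Icc 1 N,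
          F₁ ((i:ℤ)-(k:ℤ)) * F₂ ((i:ℤ)-(j:ℤ)) * F₃ ((k:ℤ)-(l:ℤ)) * F₄ ((j:ℤ)-(l:ℤ))
        ≤ F₁ ((i:ℤ)-(k:ℤ)) * (F₂ ((i:ℤ)-(j:ℤ)) * A) := by
      intro k hk
      have hre : ∑ l ∈ Finset.Icc 1 N,
          F₁ ((i:ℤ)-(k:ℤ)) * F₂ ((i:ℤ)-(j:ℤ)) * F₃ ((k:ℤ)-(l:ℤ)) * F₄ ((j:ℤ)-(l:ℤ))
          = (F₁ ((i:ℤ)-(k:ℤ)) * F₂ ((i:ℤ)-(j:ℤ)))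
            * ∑ l ∈ Finset.Icc 1 N, F₃ ((k:ℤ)-(l:ℤ)) * F₄ ((j:ℤ)-(l:ℤ)) := by
        rw [Finset.mul_sum]
        exact Finset.sum_congr rfl (fun l _ => by ring)
      rw [hre]
      calc (F₁ ((i:ℤ)-(k:ℤ)) * F₂ ((i:ℤ)-(j:ℤ)))
            * ∑ l ∈ Finset.Icc 1 N, F₃ ((k:ℤ)-(l:ℤ)) * F₄ ((j:ℤ)-(l:ℤ))
          ≤ (F₁ ((i:ℤ)-(k:ℤ)) * F₂ ((i:ℤ)-(j:ℤ))) * A :=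
            mul_le_mul_of_nonneg_left (hA j hj k hk) (mul_nonneg (h₁ _) (h₂ _))
        _ = F₁ ((i:ℤ)-(k:ℤ)) * (F₂ ((i:ℤ)-(j:ℤ)) * A) := by ring
    calc ∑ k ∈ Finset.Icc 1 N, ∑ l ∈ Finset.Icc 1 N,
          F₁ ((i:ℤ)-(k:ℤ)) * F₂ ((i:ℤ)-(j:ℤ)) * F₃ ((k:ℤ)-(l:ℤ)) * F₄ ((j:ℤ)-(l:ℤ))
        ≤ ∑ k ∈ Finset.Icc 1 N, F₁ ((i:ℤ)-(k:ℤ)) * (F₂ ((i:ℤ)-(j:ℤ)) * A) :=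
          Finset.sum_le_sum inner
      _ = (∑ k ∈ Finset.Icc 1 N, F₁ ((i:ℤ)-(k:ℤ))) * (F₂ ((i:ℤ)-(j:ℤ)) * A) :=
          (Finset.sum_mul _ _ _).symm
      _ ≤ D * (F₂ ((i:ℤ)-(j:ℤ)) * A) :=
          mul_le_mul_of_nonneg_right (hD i hi) (mul_nonneg (h₂ _) hA0)
      _ = F₂ ((i:ℤ)-(j:ℤ)) * (D * A) := by ring
  have step2 : ∀ i ∈ Finset.Icc 1 N,
      ∑ j ∈ Finset.Icc 1 N, ∑ k ∈ Finset.Icc 1 N, ∑ l ∈ Finset.Icc 1 N,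
        F₁ ((i:ℤ)-(k:ℤ)) * F₂ ((i:ℤ)-(j:ℤ)) * F₃ ((k:ℤ)-(l:ℤ)) * F₄ ((j:ℤ)-(l:ℤ))
      ≤ B * (D * A) := by
    intro i hi
    calc ∑ j ∈ Finset.Icc 1 N, ∑ k ∈ Finset.Icc 1 N, ∑ l ∈ Finset.Icc 1 N,
          F₁ ((i:ℤ)-(k:ℤ)) * F₂ ((i:ℤ)-(j:ℤ)) * F₃ ((k:ℤ)-(l:ℤ)) * F₄ ((j:ℤ)-(l:ℤ))
        ≤ ∑ j ∈ Finset.Icc 1 N, F₂ ((i:ℤ)-(j:ℤ)) * (D * A) :=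
          Finset.sum_le_sum (step1 i hi)
      _ = (∑ j ∈ Finset.Icc 1 N, F₂ ((i:ℤ)-(j:ℤ))) * (D * A) := (Finset.sum_mul _ _ _).symm
      _ ≤ B * (D * A) := mul_le_mul_of_nonneg_right (hB i hi) (mul_nonneg hD0 hA0)
  calc ∑ i ∈ Finset.Icc 1 N, ∑ j ∈ Finset.Icc 1 N, ∑ k ∈ Finset.Icc 1 N, ∑ l ∈ Finset.Icc 1 N,
        F₁ ((i:ℤ)-(k:ℤ)) * F₂ ((i:ℤ)-(j:ℤ)) * F₃ ((k:ℤ)-(l:ℤ)) * F₄ ((j:ℤ)-(l:ℤ))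
      ≤ ∑ _i ∈ Finset.Icc 1 N, B * (D * A) := Finset.sum_le_sum step2
    _ = (N:ℝ) * (B * (D * A)) := by
        rw [Finset.sum_const, Nat.card_Icc]
        simp [nsmul_eq_mul]

end helpers

open Real Finset in
set_option maxHeartbeats 2000000 in
/-- For `q ≥ 3` and `H ∈ (3/4, 1 − 1/(2q))` with `H ≠ 1 − 1/(2(q−1))`,
there is a constant `C > 0` such that for every `N ≥ 2` the quantity
`N^{1−4H} Σ_{i,j,k,l=1}^{N} |ρ_H(i−k)|^{q−1} |ρ_H(i−j)| |ρ_H(k−l)| |ρ_H(j−l)|` is bounded by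
`C N^{2H−2}` when `H < 1 − 1/(2(q−1))` and by `C N^{(2H−2)q+1}` when
`H > 1 − 1/(2(q−1))`. -/
theorem stmt19 (q : ℕ) (hq : 3 ≤ q) (H : ℝ)
    (hH : H ∈ Set.Ioo (3 / 4 : ℝ) (1 - 1 / (2 * (q : ℝ))))
    (hne : H ≠ 1 - 1 / (2 * ((q : ℝ) - 1))) :
    ∃ C : ℝ, 0 < C ∧ ∀ N : ℕ, 2 ≤ N →
      (H < 1 - 1 / (2 * ((q : ℝ) - 1)) →
        (N : ℝ) ^ (1 - 4 * H) *
          ∑ i ∈ Finset.Icc 1 N, ∑ j ∈ Finset.Icc 1 N,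
            ∑ k ∈ Finset.Icc 1 N, ∑ l ∈ Finset.Icc 1 N,
              |rhoFGN H ((i : ℤ) - (k : ℤ))| ^ (q - 1) *
              |rhoFGN H ((i : ℤ) - (j : ℤ))| *
              |rhoFGN H ((k : ℤ) - (l : ℤ))| *
              |rhoFGN H ((j : ℤ) - (l : ℤ))|
        ≤ C * (N : ℝ) ^ (2 * H - 2))
      ∧
      (1 - 1 / (2 * ((q : ℝ) - 1)) < H →
        (N : ℝ) ^ (1 - 4 * H) *
          ∑ i ∈ Finset.Icc 1 N, ∑ j ∈ Finset.Icc 1 N,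
            ∑ k ∈ Finset.Icc 1 N, ∑ l ∈ Finset.Icc 1 N,
              |rhoFGN H ((i : ℤ) - (k : ℤ))| ^ (q - 1) *
              |rhoFGN H ((i : ℤ) - (j : ℤ))| *
              |rhoFGN H ((k : ℤ) - (l : ℤ))| *
              |rhoFGN H ((j : ℤ) - (l : ℤ))|
        ≤ C * (N : ℝ) ^ ((2 * H - 2) * (q : ℝ) + 1)) := by
  obtain ⟨h34, hHlt⟩ := hH
  have hq3R : (3:ℝ) ≤ (q:ℝ) := by exact_mod_cast hq
  have hq2R : (2:ℝ) ≤ (q:ℝ) - 1 := by linarith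
  have hqcast : ((q - 1 : ℕ) : ℝ) = (q:ℝ) - 1 := by
    have h1 : 1 ≤ q := by omega
    push_cast [h1]
    ring
  have hH1 : H < 1 := by
    have h2q : (0:ℝ) < 2*(q:ℝ) := by linarith
    have : 0 < 1/(2*(q:ℝ)) := by positivity
    linarith
  have he0 : 2*H - 2 < 0 := by linarith
  have he1 : 0 < (2*H-2) + 1 := by linarith
  have he1' : (2*H-2) + 1 ≤ 1 := by linarith
  have h2e1 : 0 < 2*(2*H-2) + 1 := by linarith
  have h2e1' : 2*(2*H-2) + 1 ≤ 1 := by linarith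
  -- β' := (2*H-2)*((q:ℝ)-1)
  have hβne : (2*H-2)*((q:ℝ)-1) + 1 ≠ 0 := by
    intro h0
    apply hne
    have hq10 : (q:ℝ) - 1 ≠ 0 := by linarith
    field_simp
    nlinarith [h0]
  have hβle : (2*H-2)*((q:ℝ)-1) ≤ 0 :=
    mul_nonpos_of_nonpos_of_nonneg (by linarith) (by linarith)
  set ε : ℝ := |(2*H-2)*((q:ℝ)-1) + 1| with hεdef
  have hεpos : 0 < ε := abs_pos.mpr hβne
  have hden : 0 < ((2*H-2)+1) * (2*(2*H-2)+1) := mul_pos he1 h2e1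
  refine ⟨(4:ℝ)^(q+3) * (2 + 2/ε) / (((2*H-2)+1) * (2*(2*H-2)+1)), ?_, ?_⟩
  · apply div_pos ?_ hden
    have h2ε : 0 < 2/ε := by positivity
    have : (0:ℝ) < (4:ℝ)^(q+3) := by positivity
    nlinarith
  intro N hN2
  have hN1 : 1 ≤ N := by omega
  have hN0 : (0:ℝ) < (N:ℝ) := by exact_mod_cast (by omega : 0 < N)
  -- termwise bounds
  have hMnn : ∀ v : ℤ, (0:ℝ) ≤ ((v.natAbs + 1 : ℕ) : ℝ) := fun v => by positivity
  have habs : ∀ v : ℤ, |rhoFGN H v| ≤ 4 * ((v.natAbs + 1 : ℕ) : ℝ) ^ (2*H - 2) :=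
    abs_rho_le h34 hH1
  have h₁ : ∀ v : ℤ, |rhoFGN H v| ^ (q-1)
      ≤ 4^(q-1) * ((v.natAbs + 1 : ℕ) : ℝ) ^ ((2*H-2)*((q:ℝ)-1)) := by
    intro v
    calc |rhoFGN H v| ^ (q-1)
        ≤ (4 * ((v.natAbs + 1 : ℕ) : ℝ) ^ (2*H-2)) ^ (q-1) :=
          pow_le_pow_left₀ (abs_nonneg _) (habs v) _
      _ = 4^(q-1) * (((v.natAbs + 1 : ℕ) : ℝ) ^ (2*H-2)) ^ (q-1) := mul_pow _ _ _
      _ = 4^(q-1) * ((v.natAbs + 1 : ℕ) : ℝ) ^ ((2*H-2)*((q:ℝ)-1)) := by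
          rw [← Real.rpow_natCast ((((v.natAbs + 1 : ℕ) : ℝ)) ^ (2*H-2)) (q-1),
            ← Real.rpow_mul (hMnn v), hqcast]
  have hF1nn : ∀ v : ℤ, (0:ℝ) ≤ (4:ℝ)^(q-1) * ((v.natAbs + 1 : ℕ) : ℝ) ^ ((2*H-2)*((q:ℝ)-1)) :=
    fun v => by positivity
  have hF2nn : ∀ v : ℤ, (0:ℝ) ≤ 4 * ((v.natAbs + 1 : ℕ) : ℝ) ^ (2*H-2) :=
    fun v => by positivity
  have hterm : ∀ i j k l : ℕ,
      |rhoFGN H ((i:ℤ)-(k:ℤ))| ^ (q-1) * |rhoFGN H ((i:ℤ)-(j:ℤ))| *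
        |rhoFGN H ((k:ℤ)-(l:ℤ))| * |rhoFGN H ((j:ℤ)-(l:ℤ))|
      ≤ (4^(q-1) * ((((i:ℤ)-(k:ℤ)).natAbs + 1 : ℕ) : ℝ) ^ ((2*H-2)*((q:ℝ)-1)))
        * (4 * ((((i:ℤ)-(j:ℤ)).natAbs + 1 : ℕ) : ℝ) ^ (2*H-2))
        * (4 * ((((k:ℤ)-(l:ℤ)).natAbs + 1 : ℕ) : ℝ) ^ (2*H-2))
        * (4 * ((((j:ℤ)-(l:ℤ)).natAbs + 1 : ℕ) : ℝ) ^ (2*H-2)) := by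
    intro i j k l
    apply mul_le_mul ?_ (habs _) (abs_nonneg _)
      (mul_nonneg (mul_nonneg (hF1nn _) (hF2nn _)) (hF2nn _))
    apply mul_le_mul ?_ (habs _) (abs_nonneg _) (mul_nonneg (hF1nn _) (hF2nn _))
    exact mul_le_mul (h₁ _) (habs _) (abs_nonneg _) (hF1nn _)
  -- sum bounds
  have hsum_e : ∑ n ∈ Icc 1 N, (n:ℝ)^(2*H-2) ≤ (N:ℝ)^((2*H-2)+1)/((2*H-2)+1) := by
    have h := sumA he1 he1' N
    simpa [show (2*H-2) + 1 - 1 = 2*H-2 by ring] using h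
  have hsum_2e : ∑ n ∈ Icc 1 N, (n:ℝ)^(2*(2*H-2)) ≤ (N:ℝ)^(2*(2*H-2)+1)/(2*(2*H-2)+1) := by
    have h := sumA h2e1 h2e1' N
    simpa [show 2*(2*H-2) + 1 - 1 = 2*(2*H-2) by ring] using h
  have hAbd : ∀ j ∈ Finset.Icc 1 N, ∀ k ∈ Finset.Icc 1 N,
      ∑ l ∈ Finset.Icc 1 N,
        (4 * ((((k:ℤ)-(l:ℤ)).natAbs + 1 : ℕ) : ℝ) ^ (2*H-2))
          * (4 * ((((j:ℤ)-(l:ℤ)).natAbs + 1 : ℕ) : ℝ) ^ (2*H-2))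
      ≤ 32 * ((N:ℝ)^(2*(2*H-2)+1)/(2*(2*H-2)+1)) := by
    intro j hj k hk
    rw [Finset.mem_Icc] at hj hk
    have ptw : ∀ l ∈ Finset.Icc 1 N,
        (4 * ((((k:ℤ)-(l:ℤ)).natAbs + 1 : ℕ) : ℝ) ^ (2*H-2))
          * (4 * ((((j:ℤ)-(l:ℤ)).natAbs + 1 : ℕ) : ℝ) ^ (2*H-2))
        ≤ 8 * (((((k:ℤ)-(l:ℤ)).natAbs + 1 : ℕ) : ℝ) ^ (2*(2*H-2))
            + ((((j:ℤ)-(l:ℤ)).natAbs + 1 : ℕ) : ℝ) ^ (2*(2*H-2))) := by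
      intro l _
      have sq1 : ((((k:ℤ)-(l:ℤ)).natAbs + 1 : ℕ) : ℝ) ^ (2*H-2)
          * ((((k:ℤ)-(l:ℤ)).natAbs + 1 : ℕ) : ℝ) ^ (2*H-2)
          = ((((k:ℤ)-(l:ℤ)).natAbs + 1 : ℕ) : ℝ) ^ (2*(2*H-2)) := by
        rw [← Real.rpow_add (by positivity)]
        congr 1
        ring
      have sq2 : ((((j:ℤ)-(l:ℤ)).natAbs + 1 : ℕ) : ℝ) ^ (2*H-2)
          * ((((j:ℤ)-(l:ℤ)).natAbs + 1 : ℕ) : ℝ) ^ (2*H-2)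
          = ((((j:ℤ)-(l:ℤ)).natAbs + 1 : ℕ) : ℝ) ^ (2*(2*H-2)) := by
        rw [← Real.rpow_add (by positivity)]
        congr 1
        ring
      rw [← sq1, ← sq2]
      have ha := Real.rpow_nonneg (hMnn ((k:ℤ)-(l:ℤ))) (2*H-2)
      have hb := Real.rpow_nonneg (hMnn ((j:ℤ)-(l:ℤ))) (2*H-2)
      nlinarith [sq_nonneg (((((k:ℤ)-(l:ℤ)).natAbs + 1 : ℕ) : ℝ) ^ (2*H-2)
        - ((((j:ℤ)-(l:ℤ)).natAbs + 1 : ℕ) : ℝ) ^ (2*H-2))]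
    have r1 := reindex (β := 2*(2*H-2)) hk.1 hk.2
    have r2 := reindex (β := 2*(2*H-2)) hj.1 hj.2
    calc ∑ l ∈ Finset.Icc 1 N,
          (4 * ((((k:ℤ)-(l:ℤ)).natAbs + 1 : ℕ) : ℝ) ^ (2*H-2))
            * (4 * ((((j:ℤ)-(l:ℤ)).natAbs + 1 : ℕ) : ℝ) ^ (2*H-2))
        ≤ ∑ l ∈ Finset.Icc 1 N,
          8 * (((((k:ℤ)-(l:ℤ)).natAbs + 1 : ℕ) : ℝ) ^ (2*(2*H-2))
            + ((((j:ℤ)-(l:ℤ)).natAbs + 1 : ℕ) : ℝ) ^ (2*(2*H-2))) := Finset.sum_le_sum ptw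
      _ = 8 * ((∑ l ∈ Finset.Icc 1 N, ((((k:ℤ)-(l:ℤ)).natAbs + 1 : ℕ) : ℝ) ^ (2*(2*H-2)))
            + ∑ l ∈ Finset.Icc 1 N, ((((j:ℤ)-(l:ℤ)).natAbs + 1 : ℕ) : ℝ) ^ (2*(2*H-2))) := by
          rw [← Finset.mul_sum, Finset.sum_add_distrib]
      _ ≤ 32 * ((N:ℝ)^(2*(2*H-2)+1)/(2*(2*H-2)+1)) := by linarith [hsum_2e]
  have hBbd : ∀ i ∈ Finset.Icc 1 N,
      ∑ j ∈ Finset.Icc 1 N, 4 * ((((i:ℤ)-(j:ℤ)).natAbs + 1 : ℕ) : ℝ) ^ (2*H-2)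
      ≤ 8 * ((N:ℝ)^((2*H-2)+1)/((2*H-2)+1)) := by
    intro i hi
    rw [Finset.mem_Icc] at hi
    have r := reindex (β := 2*H-2) hi.1 hi.2
    rw [← Finset.mul_sum]
    linarith [hsum_e]
  -- generic core bound
  have hA0 : (0:ℝ) ≤ 32 * ((N:ℝ)^(2*(2*H-2)+1)/(2*(2*H-2)+1)) := by
    have := Real.rpow_nonneg hN0.le (2*(2*H-2)+1)
    positivity
  have core : ∀ Dv : ℝ, 0 ≤ Dv →
      (∀ i ∈ Finset.Icc 1 N,
        ∑ k ∈ Finset.Icc 1 N, ((((i:ℤ)-(k:ℤ)).natAbs + 1 : ℕ) : ℝ) ^ ((2*H-2)*((q:ℝ)-1)) ≤ Dv) →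
      (∑ i ∈ Finset.Icc 1 N, ∑ j ∈ Finset.Icc 1 N, ∑ k ∈ Finset.Icc 1 N, ∑ l ∈ Finset.Icc 1 N,
        |rhoFGN H ((i:ℤ)-(k:ℤ))| ^ (q-1) * |rhoFGN H ((i:ℤ)-(j:ℤ))| *
          |rhoFGN H ((k:ℤ)-(l:ℤ))| * |rhoFGN H ((j:ℤ)-(l:ℤ))|)
      ≤ (N:ℝ) * ((8 * ((N:ℝ)^((2*H-2)+1)/((2*H-2)+1)))
          * (((4:ℝ)^(q-1) * Dv) * (32 * ((N:ℝ)^(2*(2*H-2)+1)/(2*(2*H-2)+1))))) := by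
    intro Dv hDv0 hDv
    have hDbd : ∀ i ∈ Finset.Icc 1 N,
        ∑ k ∈ Finset.Icc 1 N,
          (4:ℝ)^(q-1) * ((((i:ℤ)-(k:ℤ)).natAbs + 1 : ℕ) : ℝ) ^ ((2*H-2)*((q:ℝ)-1))
        ≤ (4:ℝ)^(q-1) * Dv := by
      intro i hi
      rw [← Finset.mul_sum]
      exact mul_le_mul_of_nonneg_left (hDv i hi) (by positivity)
    calc (∑ i ∈ Finset.Icc 1 N, ∑ j ∈ Finset.Icc 1 N, ∑ k ∈ Finset.Icc 1 N, ∑ l ∈ Finset.Icc 1 N,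
          |rhoFGN H ((i:ℤ)-(k:ℤ))| ^ (q-1) * |rhoFGN H ((i:ℤ)-(j:ℤ))| *
            |rhoFGN H ((k:ℤ)-(l:ℤ))| * |rhoFGN H ((j:ℤ)-(l:ℤ))|)
        ≤ ∑ i ∈ Finset.Icc 1 N, ∑ j ∈ Finset.Icc 1 N, ∑ k ∈ Finset.Icc 1 N, ∑ l ∈ Finset.Icc 1 N,
          (4^(q-1) * ((((i:ℤ)-(k:ℤ)).natAbs + 1 : ℕ) : ℝ) ^ ((2*H-2)*((q:ℝ)-1)))
            * (4 * ((((i:ℤ)-(j:ℤ)).natAbs + 1 : ℕ) : ℝ) ^ (2*H-2))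
            * (4 * ((((k:ℤ)-(l:ℤ)).natAbs + 1 : ℕ) : ℝ) ^ (2*H-2))
            * (4 * ((((j:ℤ)-(l:ℤ)).natAbs + 1 : ℕ) : ℝ) ^ (2*H-2)) := by
          apply Finset.sum_le_sum; intro i _
          apply Finset.sum_le_sum; intro j _
          apply Finset.sum_le_sum; intro k _
          apply Finset.sum_le_sum; intro l _
          exact hterm i j k l
      _ ≤ (N:ℝ) * ((8 * ((N:ℝ)^((2*H-2)+1)/((2*H-2)+1)))
          * (((4:ℝ)^(q-1) * Dv) * (32 * ((N:ℝ)^(2*(2*H-2)+1)/(2*(2*H-2)+1))))) := by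
          exact quad_bound
            (F₁ := fun v => 4^(q-1) * ((v.natAbs + 1 : ℕ) : ℝ) ^ ((2*H-2)*((q:ℝ)-1)))
            (F₂ := fun v => 4 * ((v.natAbs + 1 : ℕ) : ℝ) ^ (2*H-2))
            (F₃ := fun v => 4 * ((v.natAbs + 1 : ℕ) : ℝ) ^ (2*H-2))
            (F₄ := fun v => 4 * ((v.natAbs + 1 : ℕ) : ℝ) ^ (2*H-2))
            hF1nn hF2nn hA0 (by positivity) hAbd hBbd hDbd
  constructor
  · -- case 1 : H < 1 - 1/(2(q-1)), i.e. β'+1 < 0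
    intro hc
    have hβ1neg : (2*H-2)*((q:ℝ)-1) + 1 < 0 := by
      have h2q : (0:ℝ) < 2*((q:ℝ)-1) := by linarith
      have h1x : 1/(2*((q:ℝ)-1)) < 1 - H := by linarith
      have := (div_lt_iff₀ h2q).mp h1x
      nlinarith
    have hεeq : ε = -((2*H-2)*((q:ℝ)-1) + 1) := by rw [hεdef]; exact abs_of_neg hβ1neg
    have hsumD : ∑ n ∈ Icc 1 N, (n:ℝ)^((2*H-2)*((q:ℝ)-1)) ≤ 1 + 1/ε := by
      have h := sumB (γ := (2*H-2)*((q:ℝ)-1) + 1) hβ1neg N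
      rw [show -((2*H-2)*((q:ℝ)-1) + 1) = ε from hεeq.symm] at h
      simpa [show (2*H-2)*((q:ℝ)-1) + 1 - 1 = (2*H-2)*((q:ℝ)-1) by ring] using h
    have hDv : ∀ i ∈ Finset.Icc 1 N,
        ∑ k ∈ Finset.Icc 1 N, ((((i:ℤ)-(k:ℤ)).natAbs + 1 : ℕ) : ℝ) ^ ((2*H-2)*((q:ℝ)-1))
        ≤ 2 * (1 + 1/ε) := by
      intro i hi
      rw [Finset.mem_Icc] at hi
      have r := reindex (β := (2*H-2)*((q:ℝ)-1)) hi.1 hi.2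
      linarith [hsumD]
    have hDv0 : (0:ℝ) ≤ 2 * (1 + 1/ε) := by positivity
    have hS := core _ hDv0 hDv
    have hcomb : (N:ℝ)^(1-4*H) * ((N:ℝ) * ((N:ℝ)^((2*H-2)+1) * (N:ℝ)^(2*(2*H-2)+1)))
        = (N:ℝ)^(2*H-2) := by
      rw [← Real.rpow_add hN0, mul_comm (N:ℝ), ← Real.rpow_add_one hN0.ne',
        ← Real.rpow_add hN0]
      congr 1
      ring
    calc (N : ℝ) ^ (1 - 4 * H) *
          ∑ i ∈ Finset.Icc 1 N, ∑ j ∈ Finset.Icc 1 N, ∑ k ∈ Finset.Icc 1 N, ∑ l ∈ Finset.Icc 1 N,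
            |rhoFGN H ((i:ℤ)-(k:ℤ))| ^ (q-1) * |rhoFGN H ((i:ℤ)-(j:ℤ))| *
              |rhoFGN H ((k:ℤ)-(l:ℤ))| * |rhoFGN H ((j:ℤ)-(l:ℤ))|
        ≤ (N:ℝ)^(1-4*H) * ((N:ℝ) * ((8 * ((N:ℝ)^((2*H-2)+1)/((2*H-2)+1)))
            * (((4:ℝ)^(q-1) * (2 * (1 + 1/ε))) * (32 * ((N:ℝ)^(2*(2*H-2)+1)/(2*(2*H-2)+1)))))) :=
          mul_le_mul_of_nonneg_left hS (Real.rpow_nonneg hN0.le _)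
      _ = ((4:ℝ)^(q-1) * (2*(1+1/ε)) * 256 / (((2*H-2)+1) * (2*(2*H-2)+1)))
          * ((N:ℝ)^(1-4*H) * ((N:ℝ) * ((N:ℝ)^((2*H-2)+1) * (N:ℝ)^(2*(2*H-2)+1)))) := by
          field_simp [he1.ne', h2e1.ne', hεpos.ne']
          ring
      _ = ((4:ℝ)^(q-1) * (2*(1+1/ε)) * 256 / (((2*H-2)+1) * (2*(2*H-2)+1))) * (N:ℝ)^(2*H-2) := by
          rw [hcomb]
      _ ≤ ((4:ℝ)^(q+3) * (2 + 2/ε) / (((2*H-2)+1) * (2*(2*H-2)+1))) * (N:ℝ)^(2*H-2) := by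
          apply mul_le_mul_of_nonneg_right ?_ (Real.rpow_nonneg hN0.le _)
          apply le_of_eq
          rw [show q + 3 = (q-1) + 4 by omega, pow_add]
          norm_num
          ring
  · -- case 2 : β'+1 > 0
    intro hc
    have hβ1pos : 0 < (2*H-2)*((q:ℝ)-1) + 1 := by
      have h2q : (0:ℝ) < 2*((q:ℝ)-1) := by linarith
      have h1x : 1 - H < 1/(2*((q:ℝ)-1)) := by linarith
      have := (lt_div_iff₀ h2q).mp h1x
      nlinarith
    have hεeq : ε = (2*H-2)*((q:ℝ)-1) + 1 := by rw [hεdef]; exact abs_of_pos hβ1pos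
    have hsumD : ∑ n ∈ Icc 1 N, (n:ℝ)^((2*H-2)*((q:ℝ)-1))
        ≤ (N:ℝ)^((2*H-2)*((q:ℝ)-1)+1)/((2*H-2)*((q:ℝ)-1)+1) := by
      have h := sumA (γ := (2*H-2)*((q:ℝ)-1) + 1) hβ1pos (by linarith) N
      simpa [show (2*H-2)*((q:ℝ)-1) + 1 - 1 = (2*H-2)*((q:ℝ)-1) by ring] using h
    have hDv : ∀ i ∈ Finset.Icc 1 N,
        ∑ k ∈ Finset.Icc 1 N, ((((i:ℤ)-(k:ℤ)).natAbs + 1 : ℕ) : ℝ) ^ ((2*H-2)*((q:ℝ)-1))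
        ≤ 2 * ((N:ℝ)^((2*H-2)*((q:ℝ)-1)+1)/((2*H-2)*((q:ℝ)-1)+1)) := by
      intro i hi
      rw [Finset.mem_Icc] at hi
      have r := reindex (β := (2*H-2)*((q:ℝ)-1)) hi.1 hi.2
      linarith [hsumD]
    have hDv0 : (0:ℝ) ≤ 2 * ((N:ℝ)^((2*H-2)*((q:ℝ)-1)+1)/((2*H-2)*((q:ℝ)-1)+1)) := by
      have := Real.rpow_nonneg hN0.le ((2*H-2)*((q:ℝ)-1)+1)
      positivity
    have hS := core _ hDv0 hDv
    have hcomb : (N:ℝ)^(1-4*H) * ((N:ℝ) * ((N:ℝ)^((2*H-2)+1)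
          * ((N:ℝ)^(2*(2*H-2)+1) * (N:ℝ)^((2*H-2)*((q:ℝ)-1)+1))))
        = (N:ℝ)^((2*H-2)*(q:ℝ)+1) := by
      rw [← Real.rpow_add hN0, ← Real.rpow_add hN0, mul_comm (N:ℝ),
        ← Real.rpow_add_one hN0.ne', ← Real.rpow_add hN0]
      congr 1
      ring
    calc (N : ℝ) ^ (1 - 4 * H) *
          ∑ i ∈ Finset.Icc 1 N, ∑ j ∈ Finset.Icc 1 N, ∑ k ∈ Finset.Icc 1 N, ∑ l ∈ Finset.Icc 1 N,
            |rhoFGN H ((i:ℤ)-(k:ℤ))| ^ (q-1) * |rhoFGN H ((i:ℤ)-(j:ℤ))| *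
              |rhoFGN H ((k:ℤ)-(l:ℤ))| * |rhoFGN H ((j:ℤ)-(l:ℤ))|
        ≤ (N:ℝ)^(1-4*H) * ((N:ℝ) * ((8 * ((N:ℝ)^((2*H-2)+1)/((2*H-2)+1)))
            * (((4:ℝ)^(q-1) * (2 * ((N:ℝ)^((2*H-2)*((q:ℝ)-1)+1)/((2*H-2)*((q:ℝ)-1)+1))))
              * (32 * ((N:ℝ)^(2*(2*H-2)+1)/(2*(2*H-2)+1)))))) :=
          mul_le_mul_of_nonneg_left hS (Real.rpow_nonneg hN0.le _)
      _ = ((4:ℝ)^(q-1) * 2 * 256 / (((2*H-2)*((q:ℝ)-1)+1) * (((2*H-2)+1) * (2*(2*H-2)+1))))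
          * ((N:ℝ)^(1-4*H) * ((N:ℝ) * ((N:ℝ)^((2*H-2)+1)
            * ((N:ℝ)^(2*(2*H-2)+1) * (N:ℝ)^((2*H-2)*((q:ℝ)-1)+1))))) := by
          field_simp [he1.ne', h2e1.ne', hβ1pos.ne']
          ring
      _ = ((4:ℝ)^(q-1) * 2 * 256 / (((2*H-2)*((q:ℝ)-1)+1) * (((2*H-2)+1) * (2*(2*H-2)+1))))
          * (N:ℝ)^((2*H-2)*(q:ℝ)+1) := by
          rw [hcomb]
      _ ≤ ((4:ℝ)^(q+3) * (2 + 2/ε) / (((2*H-2)+1) * (2*(2*H-2)+1)))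
          * (N:ℝ)^((2*H-2)*(q:ℝ)+1) := by
          apply mul_le_mul_of_nonneg_right ?_ (Real.rpow_nonneg hN0.le _)
          have h4 : (4:ℝ)^(q+3) = (4:ℝ)^(q-1) * 256 := by
            rw [show q + 3 = (q-1) + 4 by omega, pow_add]
            norm_num
          have hkey : (4:ℝ)^(q+3) * (2 + 2/ε) / (((2*H-2)+1) * (2*(2*H-2)+1))
              - (4:ℝ)^(q-1) * 2 * 256 / (((2*H-2)*((q:ℝ)-1)+1) * (((2*H-2)+1) * (2*(2*H-2)+1)))
              = (4:ℝ)^(q+3) * 2 / (((2*H-2)+1) * (2*(2*H-2)+1)) := by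
            rw [h4, hεeq]
            field_simp
            ring
          have h0 : (0:ℝ) ≤ (4:ℝ)^(q+3) * 2 / (((2*H-2)+1) * (2*(2*H-2)+1)) := by positivity
          linarith
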